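/- For c > 0, λ_P > 0, and any real r, the unique x > 0 solving c·(log(x/λ_P) − λ_P·max(1/λ_P − 1/x, 0)) = r with r ≥ 0 is given by x = −λ_P / W₀(−exp(−r/c − 1)), where W₀ is the principal branch of the Lambert W function. -/

import Mathlib

lemma texp_strictMonoOn : StrictMonoOn (fun t : ℝ => t * Real.exp t) (Set.Ici (-1)) := by
  apply strictMonoOn_of_deriv_pos (convex_Ici _)
  · exact (continuous_id.mul Real.continuous_exp).continuousOn
  · intro t ht
    rw [interior_Ici] at ht
    have hd : HasDerivAt (fun t : ℝ => t * Real.exp t) (1 * Real.exp t + t * Real.exp t) t :=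
      (hasDerivAt_id t).mul (Real.hasDerivAt_exp t)
    rw [hd.deriv]
    have h1 : (0:ℝ) < 1 + t := by linarith [Set.mem_Ioi.mp ht]
    nlinarith [Real.exp_pos t]

/-- For `c > 0`, `λ_P > 0`, and `r ≥ 0`, the unique `x > 0` solving
`c·(log(x/λ_P) − λ_P·max(1/λ_P − 1/x, 0)) = r` is
`x = −λ_P / W₀(−exp(−r/c − 1))`, where `W₀` is the principal Lambert W branch,
characterized by `W₀(z)·e^{W₀(z)} = z` and `W₀(z) ≥ −1` on `[−1/e, ∞)`. -/
theorem stmt_11 (c lamP r : ℝ) (hc : 0 < c) (hlam : 0 < lamP) (hr : 0 ≤ r)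
    (W0 : ℝ → ℝ)
    (hW : ∀ z ∈ Set.Ici (-Real.exp (-1)), W0 z * Real.exp (W0 z) = z ∧ -1 ≤ W0 z)
    (x : ℝ) (hx : x = -lamP / W0 (-Real.exp (-r / c - 1))) :
    0 < x ∧
      c * (Real.log (x / lamP) - lamP * max (1 / lamP - 1 / x) 0) = r ∧
      ∀ y : ℝ, 0 < y →
        c * (Real.log (y / lamP) - lamP * max (1 / lamP - 1 / y) 0) = r → y = x := by
  set z : ℝ := -Real.exp (-r / c - 1) with hzdef
  have hzmem : z ∈ Set.Ici (-Real.exp (-1)) := by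
    have h1 : -r / c - 1 ≤ -1 := by
      have : 0 ≤ r / c := div_nonneg hr hc.le
      rw [neg_div]; linarith
    have := Real.exp_le_exp.mpr h1
    simp only [Set.mem_Ici, hzdef]
    linarith
  obtain ⟨hWe, hW1⟩ := hW z hzmem
  set w : ℝ := W0 z with hwdef
  have hzneg : z < 0 := by
    have := Real.exp_pos (-r / c - 1); simp only [hzdef]; linarith
  have hwneg : w < 0 := by
    nlinarith [Real.exp_pos w]
  have hxpos : 0 < x := by
    rw [hx]; exact div_pos_of_neg_of_neg (by linarith) hwneg
  -- log(-w) + w = -r/c - 1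
  have hlogw : Real.log (-w) + w = -r / c - 1 := by
    have h2 : (-w) * Real.exp w = Real.exp (-r / c - 1) := by
      have : w * Real.exp w = z := hWe
      simp only [hzdef] at this; linarith
    have h3 := congrArg Real.log h2
    rw [Real.log_mul (by linarith) (Real.exp_ne_zero w), Real.log_exp, Real.log_exp] at h3
    exact h3
  have hxval : x = -lamP / w := hx
  have hxdiv : x / lamP = -1 / w := by
    rw [hxval]; field_simp [hlam.ne', hwneg.ne]
  have hinvx : 1 / x = -w / lamP := by
    rw [hxval]; field_simp [hlam.ne']
  have hlogx : Real.log (x / lamP) = -Real.log (-w) := by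
    rw [hxdiv]
    rw [show (-1 : ℝ) / w = (-w)⁻¹ by rw [inv_neg]; ring, Real.log_inv]
  have hmax : max (1 / lamP - 1 / x) 0 = (1 + w) / lamP := by
    rw [hinvx]
    rw [max_eq_left]
    · field_simp; ring
    · have h0 : 0 ≤ 1 + w := by linarith
      have h1 := div_nonneg h0 hlam.le
      have h2 : 1 / lamP - -w / lamP = (1 + w) / lamP := by ring
      rw [h2]; exact h1
  have hmain : c * (Real.log (x / lamP) - lamP * max (1 / lamP - 1 / x) 0) = r := by
    rw [hlogx, hmax]
    have hl : Real.log (-w) = -r / c - 1 - w := by linarith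
    rw [hl]
    field_simp
    ring
  refine ⟨hxpos, hmain, ?_⟩
  intro y hy heq
  -- first show lamP ≤ y
  have hylam : lamP ≤ y := by
    by_contra hlt
    push_neg at hlt
    have h1 : 1 / lamP - 1 / y < 0 := by
      have := one_div_lt_one_div_of_lt hy hlt
      linarith
    rw [max_eq_right h1.le] at heq
    have hlog : Real.log (y / lamP) = r / c := by
      field_simp at heq ⊢; linarith
    have hdiv : y / lamP < 1 := (div_lt_one hlam).mpr hlt
    have := Real.log_neg (div_pos hy hlam) hdiv
    have : (0:ℝ) ≤ r / c := div_nonneg hr hc.le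
    linarith [Real.log_neg (div_pos hy hlam) hdiv]
  have hmaxy : max (1 / lamP - 1 / y) 0 = 1 / lamP - 1 / y := by
    rw [max_eq_left]
    have := one_div_le_one_div_of_le hlam hylam
    linarith
  rw [hmaxy] at heq
  set v : ℝ := -lamP / y with hvdef
  have hvneg : v < 0 := div_neg_of_neg_of_pos (by linarith) hy
  have hv1 : -1 ≤ v := by
    rw [hvdef]
    rw [neg_div, neg_le_neg_iff]
    exact (div_le_one hy).mpr hylam
  have hlogy : Real.log (y / lamP) = r / c + 1 - lamP / y := by
    have hexp : lamP * (1 / lamP - 1 / y) = 1 - lamP / y := by field_simp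
    rw [hexp] at heq
    have : Real.log (y / lamP) - (1 - lamP / y) = r / c := by
      field_simp at heq ⊢; linarith
    linarith
  have hvexp : v * Real.exp v = z := by
    have hly : Real.log (lamP / y) = -Real.log (y / lamP) := by
      rw [← Real.log_inv]; congr 1; field_simp
    have h1 : Real.log (lamP / y) - lamP / y = -r / c - 1 := by
      rw [hly, hlogy]; ring
    have h2 : (lamP / y) * Real.exp (-(lamP / y)) = Real.exp (-r / c - 1) := by
      have hpos : 0 < lamP / y := div_pos hlam hy
      calc (lamP / y) * Real.exp (-(lamP / y))
          = Real.exp (Real.log (lamP / y)) * Real.exp (-(lamP / y)) := by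
            rw [Real.exp_log hpos]
        _ = Real.exp (Real.log (lamP / y) - lamP / y) := by
            rw [← Real.exp_add]; ring_nf
        _ = Real.exp (-r / c - 1) := by rw [h1]
    have hv : v = -(lamP / y) := by rw [hvdef]; ring
    rw [hv, hzdef, neg_mul, h2]
  have hveq : v = w := by
    have := texp_strictMonoOn.injOn (Set.mem_Ici.mpr hv1) (Set.mem_Ici.mpr hW1)
      (by simp only [hvexp]; exact hWe.symm)
    exact this
  have hwny : w ≠ 0 := hwneg.ne
  rw [hxval, eq_div_iff hwny, ← hveq, hvdef]
  field_simp
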